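/- Suppose for every δ ∈ [0, 1 - 1/A] there is a sequence of LCD codes [n_i, k_i, d_i]_q with n_i → ∞, lim d_i/n_i ≥ δ and lim k_i/n_i ≥ 1 - δ - 1/A (for some constant A > 1). Then there is a sequence of maximal-entanglement QUENTA codes [[n_t, k_t, d_t; c_t]]_q with lim d_t/n_t ≥ δ, lim k_t/n_t ≥ 1 - δ - 1/A, and lim c_t/n_t ∈ [δ, δ + 1/A]. -/

import Mathlib

open scoped BigOperators

/-- The Euclidean dual of a linear code. -/
def dualSub {F : Type} [Field F] {n : ℕ} (C : Submodule F (Fin n → F)) :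
    Submodule F (Fin n → F) where
  carrier := {x | ∀ c ∈ C, ∑ i, x i * c i = 0}
  add_mem' := by
    intro a b ha hb c hc
    simp only [Pi.add_apply, add_mul, Finset.sum_add_distrib, ha c hc, hb c hc, add_zero]
  zero_mem' := by
    intro c hc
    simp
  smul_mem' := by
    intro r x hx c hc
    simp only [Pi.smul_apply, smul_eq_mul, mul_assoc, ← Finset.mul_sum, hx c hc, mul_zero]

/-- The Hermitian dual (with respect to `x ↦ x^q`) of a code of length `n` over `F_{q²}`. -/
def hermDual {F : Type} [Field F] {n : ℕ} (q : ℕ) (C : Set (Fin n → F)) :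
    Set (Fin n → F) :=
  {x | ∀ c ∈ C, ∑ i, x i * (c i) ^ q = 0}

/-- Componentwise `q`-th power of a vector. -/
def frobVec {F : Type} [Field F] {n : ℕ} (q : ℕ) (x : Fin n → F) : Fin n → F :=
  fun i => (x i) ^ q

/-- Componentwise `q`-th power of a code: `C^q = {c^q : c ∈ C}`. -/
def frobCode {F : Type} [Field F] {n : ℕ} (q : ℕ) (C : Set (Fin n → F)) :
    Set (Fin n → F) :=
  frobVec q '' C

/-- The Hamming weight of a vector. -/
noncomputable def hamWt {F : Type} [Zero F] {n : ℕ} (x : Fin n → F) : ℕ :=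
  Nat.card {i : Fin n // x i ≠ 0}

/-- `d` is the minimum distance (= minimum nonzero weight) of the linear code `C`. -/
def IsMinDist {F : Type} [Zero F] {n : ℕ} (C : Set (Fin n → F)) (d : ℕ) : Prop :=
  (∃ c ∈ C, c ≠ 0 ∧ hamWt c = d) ∧ ∀ c ∈ C, c ≠ 0 → d ≤ hamWt c


lemma hamWt_pos {F : Type} [Zero F] {n : ℕ} {x : Fin n → F} (hx : x ≠ 0) : 1 ≤ hamWt x := by
  have : ∃ i, x i ≠ 0 := by
    by_contra h
    push_neg at h
    exact hx (funext fun i => h i)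
  obtain ⟨i, hi⟩ := this
  have : Nonempty {i : Fin n // x i ≠ 0} := ⟨⟨i, hi⟩⟩
  exact Nat.card_pos

lemma hamWt_le {F : Type} [Zero F] {n : ℕ} (x : Fin n → F) : hamWt x ≤ n := by
  have := Nat.card_le_card_of_injective (fun i : {i : Fin n // x i ≠ 0} => i.1)
    (fun a b h => Subtype.ext h)
  simpa [hamWt] using this

lemma singleton_bound {F : Type} [Field F] {n d : ℕ} (C : Submodule F (Fin n → F))
    (hd : IsMinDist (C : Set (Fin n → F)) d) :
    Module.finrank F C + d ≤ n + 1 := by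
  obtain ⟨⟨c0, hc0, hc0ne, hc0w⟩, hmin⟩ := hd
  have hd1 : 1 ≤ d := hc0w ▸ hamWt_pos hc0ne
  have hdn : d ≤ n := hc0w ▸ hamWt_le c0
  set m : ℕ := n + 1 - d with hm
  have hmn : m ≤ n := by omega
  let π : (Fin n → F) →ₗ[F] (Fin m → F) := LinearMap.funLeft F F (Fin.castLE hmn)
  have hinj : Function.Injective (π.comp C.subtype) := by
    rw [← LinearMap.ker_eq_bot, LinearMap.ker_eq_bot']
    intro x hx
    by_contra hxne
    have hxC : (x : Fin n → F) ∈ C := x.2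
    have hxne' : (x : Fin n → F) ≠ 0 := by
      intro h; exact hxne (Subtype.ext h)
    have hzero : ∀ i : Fin n, (i : ℕ) < m → (x : Fin n → F) i = 0 := by
      intro i hi
      have := congrFun hx ⟨(i : ℕ), hi⟩
      simpa [π, LinearMap.funLeft, Fin.castLE, Fin.ext_iff] using this
    have hw : hamWt (x : Fin n → F) ≤ n - m := by
      have : Function.Injective
          (fun i : {i : Fin n // (x : Fin n → F) i ≠ 0} =>
            (⟨(i.1 : ℕ) - m, by
              have hge : m ≤ (i.1 : ℕ) := by
                by_contra h
                exact i.2 (hzero i.1 (by omega))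
              have := i.1.2
              omega⟩ : Fin (n - m))) := by
        intro a b hab
        have hga : m ≤ (a.1 : ℕ) := by
          by_contra h; exact a.2 (hzero a.1 (by omega))
        have hgb : m ≤ (b.1 : ℕ) := by
          by_contra h; exact b.2 (hzero b.1 (by omega))
        have := congrArg Fin.val hab
        simp only at this
        exact Subtype.ext (Fin.ext (by omega))
      have := Nat.card_le_card_of_injective _ this
      simpa [hamWt] using this
    have := hmin _ hxC hxne'
    omega
  have hfr : Module.finrank F C ≤ m := by
    have := LinearMap.finrank_le_finrank_of_injective hinj
    simpa [Module.finrank_fin_fun] using this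
  omega

open Filter

/-- given a sequence of LCD codes `[nᵢ, kᵢ, dᵢ]_q` with `nᵢ → ∞`,
`lim dᵢ/nᵢ = δ' ≥ δ` and `lim kᵢ/nᵢ = R ≥ 1 - δ - 1/A` (for a constant `A > 1` and
`δ ∈ [0, 1 - 1/A]`), there is a sequence of maximal-entanglement QUENTA codes
`[[nᵢ, kᵢ, dᵢ; cᵢ]]_q` with `cᵢ = nᵢ - kᵢ`, the same rate and relative-distance limits,
and `lim cᵢ/nᵢ = γ ∈ [δ, δ + 1/A]`. -/
theorem asymptotically_good_maximal_entanglement_quenta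
    {F : Type} [Field F] [Fintype F]
    (A : ℝ) (hA : 1 < A) (δ : ℝ) (hδ0 : 0 ≤ δ) (hδ1 : δ ≤ 1 - 1 / A)
    (n k d : ℕ → ℕ)
    (C : ∀ i : ℕ, Submodule F (Fin (n i) → F))
    (hn : Tendsto n atTop atTop)
    (hlcd : ∀ i, C i ⊓ dualSub (C i) = ⊥)
    (hk : ∀ i, Module.finrank F (C i) = k i)
    (hd : ∀ i, IsMinDist ((C i : Set (Fin (n i) → F))) (d i))
    (δ' R : ℝ)
    (hdlim : Tendsto (fun i => (d i : ℝ) / (n i : ℝ)) atTop (nhds δ')) (hδ' : δ ≤ δ')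
    (hklim : Tendsto (fun i => (k i : ℝ) / (n i : ℝ)) atTop (nhds R))
    (hR : 1 - δ - 1 / A ≤ R) :
    ∃ (c : ℕ → ℕ) (γ : ℝ),
      (∀ i, c i = n i - k i) ∧
      Tendsto (fun i => (c i : ℝ) / (n i : ℝ)) atTop (nhds γ) ∧
      δ ≤ γ ∧ γ ≤ δ + 1 / A := by
  refine ⟨fun i => n i - k i, 1 - R, fun i => rfl, ?_, ?_, ?_⟩
  · have hkn : ∀ i, k i ≤ n i := by
      intro i
      have h1 : Module.finrank F (C i) ≤ Module.finrank F (Fin (n i) → F) :=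
        Submodule.finrank_le _
      rw [hk i, Module.finrank_fin_fun] at h1
      exact h1
    have hev : ∀ᶠ i in atTop, ((n i - k i : ℕ) : ℝ) / (n i : ℝ) = 1 - (k i : ℝ) / (n i : ℝ) := by
      filter_upwards [hn.eventually_ge_atTop 1] with i hi
      have hne : (n i : ℝ) ≠ 0 := by positivity
      rw [Nat.cast_sub (hkn i)]
      field_simp
    exact Tendsto.congr' (hev.mono fun i h => h.symm) (tendsto_const_nhds.sub hklim)
  · -- δ ≤ 1 - R via Singleton bound
    have hsb : ∀ i, k i + d i ≤ n i + 1 := by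
      intro i
      have := singleton_bound (C i) (hd i)
      rw [hk i] at this
      exact this
    have hsum : Tendsto (fun i => (d i : ℝ) / (n i : ℝ) + (k i : ℝ) / (n i : ℝ))
        atTop (nhds (δ' + R)) := hdlim.add hklim
    have hone : Tendsto (fun i => 1 + 1 / (n i : ℝ)) atTop (nhds 1) := by
      have : Tendsto (fun i => 1 / (n i : ℝ)) atTop (nhds 0) :=
        tendsto_one_div_atTop_nhds_zero_nat.comp hn
      simpa using tendsto_const_nhds.add this
    have hle : δ' + R ≤ 1 := by
      refine le_of_tendsto_of_tendsto' hsum hone ?_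
      intro i
      rcases Nat.eq_zero_or_pos (n i) with h0 | hpos
      · simp [h0]
      · have hne : (0:ℝ) < (n i : ℝ) := by positivity
        rw [← add_div, div_le_iff₀ hne]
        have h1 : ((d i : ℝ) + k i) ≤ (n i : ℝ) + 1 := by have := hsb i; exact_mod_cast by omega
        have h2 : (1 + 1 / (n i : ℝ)) * (n i : ℝ) = (n i : ℝ) + 1 := by field_simp
        linarith
    linarith
  · linarith
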